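/- With Φ(S,Q) = S ⊙ S − QΛQᵀ and the Frobenius inner product ⟨A,B⟩ = tr(AᵀB), the adjoint of DΦ(S,Q) applied to a symmetric matrix ΔZ is (2 S ⊙ ΔZ, [QΛQᵀ, ΔZ]·Q); i.e., for all tangent vectors (ΔS, QΩ) with ΔS symmetric and Ω skew, ⟨DΦ(S,Q)[(ΔS,QΩ)], ΔZ⟩ = ⟨ΔS, 2S⊙ΔZ⟩ + ⟨QΩ, [QΛQᵀ,ΔZ]Q⟩. -/
import Mathlib


open Matrix

lemma had_trace {n : ℕ} (X Y Z : Matrix (Fin n) (Fin n) ℝ) :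
    Matrix.trace ((X.hadamard Y)ᵀ * Z) = Matrix.trace (Yᵀ * (X.hadamard Z)) := by
  simp only [Matrix.trace, Matrix.diag, Matrix.mul_apply, Matrix.transpose_apply,
    Matrix.hadamard_apply]
  congr 1; ext i; congr 1; ext j; ring

theorem stmt_16 (n : ℕ) (Lam : Fin n → ℝ)
    (S Q : Matrix (Fin n) (Fin n) ℝ) (hS : S.IsSymm) (hQ : Qᵀ * Q = 1)
    (ΔS Ω ΔZ : Matrix (Fin n) (Fin n) ℝ) (hΔS : ΔS.IsSymm) (hΩ : Ωᵀ = -Ω) (hΔZ : ΔZ.IsSymm) :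
    let A := Q * Matrix.diagonal Lam * Qᵀ
    Matrix.trace (((2 : ℝ) • S.hadamard ΔS
        + (A * ((Q * Ω) * Qᵀ) - ((Q * Ω) * Qᵀ) * A))ᵀ * ΔZ)
      = Matrix.trace (ΔSᵀ * ((2 : ℝ) • S.hadamard ΔZ))
        + Matrix.trace ((Q * Ω)ᵀ * ((A * ΔZ - ΔZ * A) * Q)) := by
  intro A
  have hA : Aᵀ = A := by
    simp [A, Matrix.transpose_mul, Matrix.mul_assoc]
  have hMT : ((Q * Ω) * Qᵀ)ᵀ = -((Q * Ω) * Qᵀ) := by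
    simp [Matrix.transpose_mul, hΩ, Matrix.mul_assoc]
  set M := (Q * Ω) * Qᵀ with hM
  have key1 : Matrix.trace (((2 : ℝ) • S.hadamard ΔS)ᵀ * ΔZ)
      = Matrix.trace (ΔSᵀ * ((2 : ℝ) • S.hadamard ΔZ)) := by
    rw [Matrix.transpose_smul, Matrix.smul_mul, Matrix.mul_smul, Matrix.trace_smul,
      Matrix.trace_smul, had_trace]
  have key2 : Matrix.trace ((A * M - M * A)ᵀ * ΔZ)
      = Matrix.trace ((Q * Ω)ᵀ * ((A * ΔZ - ΔZ * A) * Q)) := by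
    have hQQ : Q * Qᵀ = 1 := by
      have := mul_eq_one_comm.mp hQ
      simpa using this
    have hrhs : Matrix.trace ((Q * Ω)ᵀ * ((A * ΔZ - ΔZ * A) * Q))
        = Matrix.trace ((A * ΔZ - ΔZ * A) * Q * (Q * Ω)ᵀ) := by
      rw [Matrix.trace_mul_comm]
    rw [hrhs]
    have hthis : Q * (Q * Ω)ᵀ = -M := by
      rw [Matrix.transpose_mul, hΩ, hM]
      simp [Matrix.mul_assoc]
    rw [Matrix.mul_assoc (A * ΔZ - ΔZ * A) Q ((Q * Ω)ᵀ), hthis]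
    have hLT : (A * M - M * A)ᵀ = A * M - M * A := by
      rw [Matrix.transpose_sub, Matrix.transpose_mul A M, Matrix.transpose_mul M A, hA, hMT]
      simp only [Matrix.neg_mul, Matrix.mul_neg]
      abel
    rw [hLT]
    simp only [Matrix.sub_mul, Matrix.mul_neg, Matrix.trace_sub, Matrix.trace_neg]
    rw [Matrix.trace_mul_cycle A M ΔZ, Matrix.trace_mul_cycle A ΔZ M]
    ring
  rw [Matrix.transpose_add, Matrix.add_mul, Matrix.trace_add, key1, key2]
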